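/- The restriction of irreducible representations from the symmetric group S_{n₁+n₂} to S_{n₁} × S_{n₂} is multiplicity free when min(n₁,n₂) ≤ 2; that is, (S_{n+1}, S_n) and (S_{n+2}, S_n × S_2) are strong Gelfand pairs: for every irreducible complex representation π of the big group and every irreducible representation ρ of the subgroup, dim Hom(Res π, ρ) ≤ 1. -/

import Mathlib

/-- A representation is irreducible: it is nonzero and has no invariant subspaces
other than `⊥` and `⊤`. -/
def IsIrreducibleRep {G V : Type*} [Group G] [AddCommGroup V] [Module ℂ V]
    (ρ : Representation ℂ G V) : Prop :=
  (∃ v : V, v ≠ 0) ∧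
  ∀ U : Submodule ℂ V, (∀ g : G, ∀ v ∈ U, ρ g v ∈ U) → U = ⊥ ∨ U = ⊤

/-- The space of `G`-equivariant linear maps between two representations. -/
def EquivariantMaps {G V₁ V₂ : Type*} [Group G]
    [AddCommGroup V₁] [Module ℂ V₁] [AddCommGroup V₂] [Module ℂ V₂]
    (ρ₁ : Representation ℂ G V₁) (ρ₂ : Representation ℂ G V₂) :
    Submodule ℂ (V₁ →ₗ[ℂ] V₂) where
  carrier := {f | ∀ (g : G) (v : V₁), f (ρ₁ g v) = ρ₂ g (f v)}
  add_mem' := by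
    intro f g hf hg x v
    simp [hf x v, hg x v]
  zero_mem' := by
    intro x v
    simp
  smul_mem' := by
    intro c f hf x v
    simp [hf x v]

open LinearMap

section Basic
variable {G V : Type*} [Group G] [AddCommGroup V] [Module ℂ V]

lemma irr_nontrivial {ρ : Representation ℂ G V} (h : IsIrreducibleRep ρ) : Nontrivial V := by
  obtain ⟨v, hv⟩ := h.1; exact nontrivial_of_ne v 0 hv

lemma irr_findim [Fintype G] {ρ : Representation ℂ G V} (h : IsIrreducibleRep ρ) :
    FiniteDimensional ℂ V := by
  obtain ⟨v, hv⟩ := h.1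
  set U := Submodule.span ℂ (Set.range fun g : G => ρ g v) with hU
  have hUinv : ∀ g : G, ∀ w ∈ U, ρ g w ∈ U := by
    intro g w hw
    induction hw using Submodule.span_induction with
    | mem x hx =>
        obtain ⟨x₀, rfl⟩ := hx
        exact Submodule.subset_span ⟨g * x₀, by simp [map_mul]⟩
    | zero => simp
    | add x y _ _ hx hy => rw [map_add]; exact U.add_mem hx hy
    | smul c x _ hx => rw [map_smul]; exact U.smul_mem c hx
  have hUtop : U = ⊤ := by
    rcases h.2 U hUinv with hb | ht
    · exfalso
      have : v ∈ U := Submodule.subset_span ⟨1, by simp⟩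
      rw [hb] at this
      exact hv (by simpa using this)
    · exact ht
  have hfd : FiniteDimensional ℂ U := FiniteDimensional.span_of_finite ℂ (Set.finite_range _)
  rw [hUtop] at hfd
  exact Module.Finite.equiv (Submodule.topEquiv : (⊤ : Submodule ℂ V) ≃ₗ[ℂ] V)

/-- Schur: a linear endomorphism commuting with an irreducible action is scalar. -/
lemma schur_scalar [FiniteDimensional ℂ V] {ρ : Representation ℂ G V}
    (h : IsIrreducibleRep ρ) (f : V →ₗ[ℂ] V)
    (hf : ∀ g : G, ∀ v : V, f (ρ g v) = ρ g (f v)) :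
    ∃ c : ℂ, f = c • LinearMap.id := by
  have : Nontrivial V := irr_nontrivial h
  obtain ⟨c, hc⟩ := Module.End.exists_eigenvalue f
  refine ⟨c, ?_⟩
  have hker : Module.End.eigenspace f c ≠ ⊥ := Module.End.hasEigenvalue_iff.mp hc
  have hinv : ∀ g : G, ∀ w ∈ Module.End.eigenspace f c, ρ g w ∈ Module.End.eigenspace f c := by
    intro g w hw
    rw [Module.End.mem_genEigenspace_one] at hw ⊢
    rw [hf g w, hw, map_smul]
  rcases h.2 _ hinv with hb | ht
  · exact absurd hb hker
  · ext v
    have : v ∈ Module.End.eigenspace f c := ht ▸ Submodule.mem_top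
    rw [Module.End.mem_genEigenspace_one] at this
    simpa using this

end Basic

section Burnside
variable {V : Type*} [AddCommGroup V] [Module ℂ V]

/-- Schur for commutants: an endomorphism commuting with an irreducibly-acting
subalgebra is a scalar. -/
lemma schur_comm [FiniteDimensional ℂ V] [Nontrivial V] (S : Subalgebra ℂ (Module.End ℂ V))
    (hirr : ∀ U : Submodule ℂ V, (∀ s ∈ S, ∀ v ∈ U, s v ∈ U) → U = ⊥ ∨ U = ⊤)
    (f : Module.End ℂ V) (hf : ∀ s ∈ S, s * f = f * s) :
    ∃ c : ℂ, f = c • 1 := by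
  obtain ⟨c, hc⟩ := Module.End.exists_eigenvalue f
  refine ⟨c, ?_⟩
  have hker : Module.End.eigenspace f c ≠ ⊥ := Module.End.hasEigenvalue_iff.mp hc
  have hinv : ∀ s ∈ S, ∀ w ∈ Module.End.eigenspace f c, s w ∈ Module.End.eigenspace f c := by
    intro s hs w hw
    rw [Module.End.mem_genEigenspace_one] at hw ⊢
    have := congrArg (fun t : Module.End ℂ V => t w) (hf s hs)
    simp only [Module.End.mul_apply] at this
    rw [← this, hw, map_smul]
  rcases hirr _ hinv with hb | ht
  · exact absurd hb hker
  · ext v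
    have : v ∈ Module.End.eigenspace f c := ht ▸ Submodule.mem_top
    rw [Module.End.mem_genEigenspace_one] at this
    simpa using this

lemma dense_aux [FiniteDimensional ℂ V] [Nontrivial V] (S : Subalgebra ℂ (Module.End ℂ V))
    (hirr : ∀ U : Submodule ℂ V, (∀ s ∈ S, ∀ v ∈ U, s v ∈ U) → U = ⊥ ∨ U = ⊤) :
    ∀ m : ℕ, ∀ v : Fin m → V, LinearIndependent ℂ v →
      ∀ w : Fin m → V, ∃ s ∈ S, ∀ i, s (v i) = w i := by
  intro m
  induction m with
  | zero => exact fun v _ w => ⟨1, S.one_mem, fun i => i.elim0⟩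
  | succ m IH =>
    intro v hv w
    set v' : Fin m → V := v ∘ Fin.castSucc with hv'def
    have hv' : LinearIndependent ℂ v' := hv.comp _ (Fin.castSucc_injective m)
    set vl := v (Fin.last m) with hvl
    -- Step A : there is t ∈ S killing all v' but not vl
    have hA : ∃ t, t ∈ S ∧ (∀ i : Fin m, t (v' i) = 0) ∧ t vl ≠ 0 := by
      by_contra hcon
      push_neg at hcon
      have hcon' : ∀ t ∈ S, (∀ i : Fin m, t (v' i) = 0) → t vl = 0 := hcon
      classical
      have hex : ∀ (i : Fin m) (x : V), ∃ s, s ∈ S ∧ ∀ j, s (v' j) = (Pi.single i x : Fin m → V) j :=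
        fun i x => by
          obtain ⟨s, hs, h⟩ := IH v' hv' (Pi.single i x)
          exact ⟨s, hs, h⟩
      set sel : Fin m → V → Module.End ℂ V := fun i x => (hex i x).choose with hsel
      have hselS : ∀ i x, sel i x ∈ S := fun i x => (hex i x).choose_spec.1
      have hselv : ∀ i x j, sel i x (v' j) = (Pi.single i x : Fin m → V) j :=
        fun i x => (hex i x).choose_spec.2
      -- the well-definedness principle
      have key : ∀ (a b : Module.End ℂ V), a ∈ S → b ∈ S →
          (∀ j, a (v' j) = b (v' j)) → a vl = b vl := by
        intro a b ha hb hab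
        have : (a - b) vl = 0 := hcon' (a - b) (S.sub_mem ha hb)
          (fun j => by simp [LinearMap.sub_apply, hab j])
        simpa [sub_eq_zero, LinearMap.sub_apply] using this
      -- linear maps
      have gmap : ∀ i : Fin m, ∃ gi : Module.End ℂ V,
          (∀ x, gi x = sel i x vl) ∧ ∀ a ∈ S, a * gi = gi * a := by
        intro i
        refine ⟨{ toFun := fun x => sel i x vl
                  map_add' := ?_
                  map_smul' := ?_ }, fun x => rfl, ?_⟩
        · intro x y
          have := key (sel i (x + y)) (sel i x + sel i y)
            (hselS i _) (S.add_mem (hselS i x) (hselS i y))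
            (fun j => by simp [hselv, Pi.single_add])
          simpa using this
        · intro c x
          have := key (sel i (c • x)) (c • sel i x)
            (hselS i _) (S.smul_mem (hselS i x) c)
            (fun j => by simp [hselv, Pi.single_smul])
          simpa using this
        · intro a ha
          ext x
          simp only [Module.End.mul_apply, LinearMap.coe_mk, AddHom.coe_mk]
          have := key (a * sel i x) (sel i (a x)) (S.mul_mem ha (hselS i x)) (hselS i _)
            (fun j => by
              simp only [Module.End.mul_apply, hselv]
              by_cases hji : j = i
              · subst hji; simp
              · simp [Pi.single_eq_of_ne hji])
          simpa [Module.End.mul_apply] using this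
      choose gi hgi1 hgi2 using gmap
      have hc : ∀ i, ∃ c : ℂ, gi i = c • 1 := fun i =>
        schur_comm S hirr (gi i) (hgi2 i)
      choose c hcspec using hc
      -- derive the dependence relation
      have hrel : vl = ∑ i : Fin m, c i • v' i := by
        have hu : ((1 : Module.End ℂ V) - ∑ i : Fin m, sel i (v' i)) vl = 0 := by
          apply hcon'
          · exact S.sub_mem S.one_mem (Subalgebra.sum_mem S (fun i _ => hselS i (v' i)))
          · intro j
            simp only [LinearMap.sub_apply, Module.End.one_apply, LinearMap.coe_sum,
              Finset.sum_apply, hselv]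
            rw [← Finset.sum_apply, Finset.univ_sum_single (fun j => v' j), sub_self]
        have : vl = (∑ i : Fin m, sel i (v' i)) vl := by
          have := hu
          rw [LinearMap.sub_apply, sub_eq_zero] at this
          simpa using this
        rw [this]
        simp only [LinearMap.coe_sum, Finset.sum_apply]
        refine Finset.sum_congr rfl (fun i _ => ?_)
        have h1 : sel i (v' i) vl = gi i (v' i) := (hgi1 i (v' i)).symm
        rw [h1, hcspec i]
        simp
      -- contradiction with linear independence
      have hl := Fintype.linearIndependent_iff.mp hv
        (Fin.snoc (fun i => c i) (-1 : ℂ))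
        (by
          rw [Fin.sum_univ_castSucc]
          simp only [Fin.snoc_castSucc, Fin.snoc_last]
          rw [show ∀ z : V, (-1 : ℂ) • z = -z from fun z => by simp]
          rw [← hvl]
          rw [hrel]
          simp [hv'def])
      have := hl (Fin.last m)
      simp at this
    obtain ⟨t, htS, htv', htvl⟩ := hA
    -- Step B : the left-ideal image is everything
    classical
    let U : Submodule ℂ V :=
      { carrier := {x | ∃ s, s ∈ S ∧ (∀ i : Fin m, s (v' i) = 0) ∧ s vl = x}
        add_mem' := by
          rintro a b ⟨s, hs, h0, rfl⟩ ⟨s', hs', h0', rfl⟩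
          exact ⟨s + s', S.add_mem hs hs', fun i => by simp [h0 i, h0' i], by simp⟩
        zero_mem' := ⟨0, S.zero_mem, fun i => rfl, rfl⟩
        smul_mem' := by
          rintro cc a ⟨s, hs, h0, rfl⟩
          exact ⟨cc • s, S.smul_mem hs cc, fun i => by simp [h0 i], by simp⟩ }
    have hUinv : ∀ s ∈ S, ∀ x ∈ U, s x ∈ U := by
      rintro a ha x ⟨s, hs, h0, rfl⟩
      exact ⟨a * s, S.mul_mem ha hs, fun i => by simp [Module.End.mul_apply, h0 i],
        by simp [Module.End.mul_apply]⟩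
    have hUtop : U = ⊤ := by
      rcases hirr U hUinv with hb | ht
      · exfalso
        have : t vl ∈ U := ⟨t, htS, htv', rfl⟩
        rw [hb] at this
        exact htvl (by simpa using this)
      · exact ht
    obtain ⟨s₀, hs₀S, hs₀⟩ := IH v' hv' (fun i => w i.castSucc)
    have hmem : w (Fin.last m) - s₀ vl ∈ U := hUtop ▸ Submodule.mem_top
    obtain ⟨s₁, hs₁S, hs₁0, hs₁l⟩ := hmem
    refine ⟨s₀ + s₁, S.add_mem hs₀S hs₁S, fun i => ?_⟩
    induction i using Fin.lastCases with
    | last => simp [← hvl, hs₁l]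
    | cast j =>
        have e : v j.castSucc = v' j := rfl
        rw [LinearMap.add_apply, e, hs₁0 j, hs₀ j, add_zero]

/-- Burnside : a subalgebra of endomorphisms acting irreducibly on a nontrivial
finite-dimensional complex vector space is everything. -/
lemma burnside [FiniteDimensional ℂ V] [Nontrivial V] (S : Subalgebra ℂ (Module.End ℂ V))
    (hirr : ∀ U : Submodule ℂ V, (∀ s ∈ S, ∀ v ∈ U, s v ∈ U) → U = ⊥ ∨ U = ⊤)
    (X : Module.End ℂ V) : X ∈ S := by
  let b := Module.finBasis ℂ V
  obtain ⟨s, hsS, hs⟩ := dense_aux S hirr _ b b.linearIndependent (fun i => X (b i))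
  have : s = X := b.ext fun i => hs i
  exact this ▸ hsS

end Burnside

section AntiInv
open MonoidAlgebra
variable {G : Type*} [Group G]

noncomputable def invMap (x : MonoidAlgebra ℂ G) : MonoidAlgebra ℂ G :=
  MonoidAlgebra.ofCoeff (Finsupp.equivMapDomain (Equiv.inv G) x.coeff)

lemma invMap_apply (x : MonoidAlgebra ℂ G) (g : G) : (invMap x).coeff g = x.coeff g⁻¹ := by
  simp [invMap, Finsupp.equivMapDomain_apply]

lemma invMap_single (a : G) (c : ℂ) :
    invMap (MonoidAlgebra.single a c) = MonoidAlgebra.single a⁻¹ c := by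
  show MonoidAlgebra.ofCoeff _ = _
  rw [MonoidAlgebra.coeff_single, Finsupp.equivMapDomain_single]
  rfl

lemma invMap_add (x y : MonoidAlgebra ℂ G) : invMap (x + y) = invMap x + invMap y := by
  ext g; rw [invMap_apply, MonoidAlgebra.coeff_add, Finsupp.add_apply, MonoidAlgebra.coeff_add,
    Finsupp.add_apply, invMap_apply, invMap_apply]

lemma invMap_mul (x y : MonoidAlgebra ℂ G) : invMap (x * y) = invMap y * invMap x := by
  induction x using MonoidAlgebra.induction_linear with
  | zero => simp [invMap_add, show invMap (0 : MonoidAlgebra ℂ G) = 0 by ext g; simp [invMap_apply]]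
  | add a b ha hb => rw [add_mul, invMap_add, ha, hb, invMap_add, mul_add]
  | single a c =>
    induction y using MonoidAlgebra.induction_linear with
    | zero => simp [show invMap (0 : MonoidAlgebra ℂ G) = 0 by ext g; simp [invMap_apply]]
    | add a' b' ha' hb' => rw [mul_add, invMap_add, ha', hb', invMap_add, add_mul]
    | single b d =>
      rw [MonoidAlgebra.single_mul_single, invMap_single, invMap_single, invMap_single,
        MonoidAlgebra.single_mul_single, mul_inv_rev, mul_comm c d]

variable {H : Type*} [Group H]

/-- Conjugation-invariant elements of the group algebra commute, when every group element
is conjugate to its inverse under the subgroup. -/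
lemma comm_of_invariant (ι : H →* G)
    (hconj : ∀ g : G, ∃ h : H, ι h * g * (ι h)⁻¹ = g⁻¹)
    (x y : MonoidAlgebra ℂ G)
    (hx : ∀ h : H, MonoidAlgebra.single (ι h) (1 : ℂ) * x * MonoidAlgebra.single (ι h)⁻¹ 1 = x)
    (hy : ∀ h : H, MonoidAlgebra.single (ι h) (1 : ℂ) * y * MonoidAlgebra.single (ι h)⁻¹ 1 = y) :
    x * y = y * x := by
  have fix : ∀ z : MonoidAlgebra ℂ G,
      (∀ h : H, MonoidAlgebra.single (ι h) (1 : ℂ) * z * MonoidAlgebra.single (ι h)⁻¹ 1 = z) →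
      invMap z = z := by
    intro z hz
    have coef : ∀ (h : H) (g : G), z.coeff ((ι h)⁻¹ * g * ι h) = z.coeff g := by
      intro h g
      have := congrArg (fun w : MonoidAlgebra ℂ G => w.coeff g) (hz h)
      simp only [MonoidAlgebra.coeff_mul_single_apply, MonoidAlgebra.coeff_single_mul_apply, inv_inv,
        one_mul, mul_one] at this
      rw [← this, mul_assoc]
    ext g
    obtain ⟨h, hh⟩ := hconj g
    have e : (ι h)⁻¹ * g⁻¹ * ι h = g := by rw [← hh]; group
    rw [invMap_apply, ← coef h g⁻¹, e]
  have e1' : ∀ (h : H) (w : MonoidAlgebra ℂ G),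
      MonoidAlgebra.single ((ι h)⁻¹) (1 : ℂ) * (MonoidAlgebra.single (ι h) 1 * w) = w := by
    intro h w
    rw [← mul_assoc, MonoidAlgebra.single_mul_single, inv_mul_cancel, one_mul,
      ← MonoidAlgebra.one_def, one_mul]
  have hxy : ∀ h : H,
      MonoidAlgebra.single (ι h) (1 : ℂ) * (x * y) * MonoidAlgebra.single (ι h)⁻¹ 1 = x * y := by
    intro h
    conv_rhs => rw [← hx h, ← hy h]
    simp only [mul_assoc, e1' h]
  calc x * y = invMap (x * y) := (fix _ hxy).symm
    _ = invMap y * invMap x := invMap_mul _ _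
    _ = y * x := by rw [fix _ hx, fix _ hy]

end AntiInv
section EndoComm
variable {G H : Type*} [Group G] [Group H] [Fintype G] [Fintype H] [DecidableEq G]
variable {V : Type*} [AddCommGroup V] [Module ℂ V]

/-- Endomorphisms commuting with the image of the subgroup commute with each other,
under the Gelfand conjugation condition. -/
lemma endo_comm [FiniteDimensional ℂ V] [Nontrivial V]
    (π : Representation ℂ G V) (hπ : IsIrreducibleRep π) (ι : H →* G)
    (hconj : ∀ g : G, ∃ h : H, ι h * g * (ι h)⁻¹ = g⁻¹)
    (X Y : Module.End ℂ V)
    (hX : ∀ h : H, π (ι h) * X = X * π (ι h))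
    (hY : ∀ h : H, π (ι h) * Y = Y * π (ι h)) :
    X * Y = Y * X := by
  set Φ := π.asAlgebraHom with hΦ
  -- Burnside: Φ is surjective
  have hsurj : ∀ Z : Module.End ℂ V, ∃ z, Φ z = Z := by
    intro Z
    have hrange : ∀ U : Submodule ℂ V, (∀ s ∈ Φ.range, ∀ v ∈ U, s v ∈ U) → U = ⊥ ∨ U = ⊤ := by
      intro U hU
      apply hπ.2
      intro g v hv
      exact hU (π g) ⟨MonoidAlgebra.of ℂ G g, π.asAlgebraHom_of g⟩ v hv
    obtain ⟨z, hz⟩ := burnside Φ.range hrange Z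
    exact ⟨z, hz⟩
  -- conjugation and averaging in the group algebra
  set cnj : H → MonoidAlgebra ℂ G → MonoidAlgebra ℂ G := fun h z =>
    MonoidAlgebra.single (ι h) (1 : ℂ) * z * MonoidAlgebra.single (ι h)⁻¹ 1 with hcnj
  have cnj_cnj : ∀ (h₀ h : H) (z), cnj h₀ (cnj h z) = cnj (h₀ * h) z := by
    intro h₀ h z
    simp only [hcnj]
    rw [map_mul ι, mul_inv_rev,
      ← one_mul (1 : ℂ), ← MonoidAlgebra.single_mul_single (m₁ := ι h₀) (m₂ := ι h),
      ← MonoidAlgebra.single_mul_single (m₁ := (ι h)⁻¹) (m₂ := (ι h₀)⁻¹)]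
    noncomm_ring
  set avg : MonoidAlgebra ℂ G → MonoidAlgebra ℂ G := fun z =>
    (Fintype.card H : ℂ)⁻¹ • ∑ h : H, cnj h z with havg
  have avg_invariant : ∀ (h₀ : H) (z), cnj h₀ (avg z) = avg z := by
    intro h₀ z
    simp only [havg, hcnj]
    rw [Algebra.mul_smul_comm, Algebra.smul_mul_assoc, Finset.mul_sum, Finset.sum_mul]
    congr 1
    exact Fintype.sum_equiv (Equiv.mulLeft h₀) _ _
      (fun h => by simpa [hcnj] using (cnj_cnj h₀ h z))
  have cardH : (Fintype.card H : ℂ) ≠ 0 := by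
    exact_mod_cast Nat.cast_ne_zero.mpr Fintype.card_ne_zero
  have Φcnj : ∀ (h : H) (z), Φ (cnj h z) = π (ι h) * Φ z * π ((ι h)⁻¹) := by
    intro h z
    simp only [hcnj, map_mul]
    congr 1
    · congr 1
      exact π.asAlgebraHom_single_one (ι h)
    · exact π.asAlgebraHom_single_one ((ι h)⁻¹)
  have Φavg : ∀ (Z : Module.End ℂ V) (z), Φ z = Z → (∀ h : H, π (ι h) * Z = Z * π (ι h)) →
      Φ (avg z) = Z := by
    intro Z z hz hZ
    simp only [havg, map_smul, map_sum, Φcnj, hz]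
    have : ∀ h : H, π (ι h) * Z * π ((ι h)⁻¹) = Z := by
      intro h
      rw [hZ h, mul_assoc, ← map_mul, mul_inv_cancel, map_one, mul_one]
    simp only [this]
    rw [Finset.sum_const, Finset.card_univ, ← Nat.cast_smul_eq_nsmul ℂ, smul_smul,
      inv_mul_cancel₀ cardH, one_smul]
  obtain ⟨zX, hzX⟩ := hsurj X
  obtain ⟨zY, hzY⟩ := hsurj Y
  have hbX : Φ (avg zX) = X := Φavg X zX hzX hX
  have hbY : Φ (avg zY) = Y := Φavg Y zY hzY hY
  have hcomm : avg zX * avg zY = avg zY * avg zX := by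
    apply comm_of_invariant ι hconj
    · exact fun h => avg_invariant h zX
    · exact fun h => avg_invariant h zY
  rw [← hbX, ← hbY, ← map_mul, hcomm, map_mul]

end EndoComm
section GelfandPair

lemma mem_equivariantMaps {G V₁ V₂ : Type*} [Group G]
    [AddCommGroup V₁] [Module ℂ V₁] [AddCommGroup V₂] [Module ℂ V₂]
    (ρ₁ : Representation ℂ G V₁) (ρ₂ : Representation ℂ G V₂) (f : V₁ →ₗ[ℂ] V₂) :
    f ∈ EquivariantMaps ρ₁ ρ₂ ↔ ∀ (g : G) (v : V₁), f (ρ₁ g v) = ρ₂ g (f v) :=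
  Iff.rfl

theorem gelfand_rank_le_one {G H : Type*} [Group G] [Group H] [Fintype G] [Fintype H]
    [DecidableEq G]
    (ι : H →* G) (hconj : ∀ g : G, ∃ h : H, ι h * g * (ι h)⁻¹ = g⁻¹)
    {Vπ Vρ : Type*} [AddCommGroup Vπ] [Module ℂ Vπ] [AddCommGroup Vρ] [Module ℂ Vρ]
    (π : Representation ℂ G Vπ) (hπ : IsIrreducibleRep π)
    (ρ : Representation ℂ H Vρ) (hρ : IsIrreducibleRep ρ) :
    Module.rank ℂ (EquivariantMaps (π.comp ι) ρ) ≤ 1 := by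
  haveI : FiniteDimensional ℂ Vπ := irr_findim hπ
  haveI : FiniteDimensional ℂ Vρ := irr_findim hρ
  haveI : Nontrivial Vπ := irr_nontrivial hπ
  haveI : Nontrivial Vρ := irr_nontrivial hρ
  set M := EquivariantMaps (π.comp ι) ρ with hM
  by_cases hex : ∃ f ∈ M, f ≠ (0 : Vπ →ₗ[ℂ] Vρ)
  · obtain ⟨f₁, hf₁M, hf₁0⟩ := hex
    have hf₁M' : ∀ (h : H) (v : Vπ), f₁ (π (ι h) v) = ρ h (f₁ v) := hf₁M
    -- f₁ is surjective
    have hrange : LinearMap.range f₁ = ⊤ := by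
      have hinv : ∀ (h : H), ∀ v ∈ LinearMap.range f₁, ρ h v ∈ LinearMap.range f₁ := by
        rintro h v ⟨u, rfl⟩
        exact ⟨π (ι h) u, hf₁M' h u⟩
      rcases hρ.2 (LinearMap.range f₁) hinv with hb | ht
      · exact absurd (LinearMap.range_eq_bot.mp hb) hf₁0
      · exact ht
    obtain ⟨s₀, hs₀⟩ := f₁.exists_rightInverse_of_surjective hrange
    have hs₀' : ∀ y, f₁ (s₀ y) = y := fun y => congrArg (fun t => t y) hs₀
    have cardH : (Fintype.card H : ℂ) ≠ 0 := Nat.cast_ne_zero.mpr Fintype.card_ne_zero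
    set s : Vρ →ₗ[ℂ] Vπ :=
      (Fintype.card H : ℂ)⁻¹ • ∑ h : H, (π (ι h)) ∘ₗ s₀ ∘ₗ (ρ h⁻¹ : Vρ →ₗ[ℂ] Vρ) with hs
    have hs_sec : ∀ y, f₁ (s y) = y := by
      intro y
      rw [hs]
      simp only [LinearMap.smul_apply, map_smul, LinearMap.coe_sum, Finset.sum_apply,
        map_sum, LinearMap.comp_apply]
      have hterm : ∀ h : H, f₁ (π (ι h) (s₀ ((ρ h⁻¹) y))) = y := by
        intro h
        rw [hf₁M' h, hs₀']
        show (ρ h * ρ h⁻¹) y = y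
        rw [← map_mul, mul_inv_cancel, map_one, Module.End.one_apply]
      rw [Finset.sum_congr rfl (fun h _ => hterm h), Finset.sum_const, Finset.card_univ,
        ← Nat.cast_smul_eq_nsmul ℂ, smul_smul, inv_mul_cancel₀ cardH, one_smul]
    have hs_inj : Function.Injective s := by
      intro a b hab
      have := congrArg f₁ hab
      rwa [hs_sec, hs_sec] at this
    have hs_eqv : ∀ (h : H) (y : Vρ), s (ρ h y) = π (ι h) (s y) := by
      intro h y
      rw [hs]
      simp only [LinearMap.smul_apply, map_smul, LinearMap.coe_sum, Finset.sum_apply,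
        map_sum, LinearMap.comp_apply]
      congr 1
      refine Eq.symm (Fintype.sum_equiv (Equiv.mulLeft h)
        (fun h' => π (ι h) (π (ι h') (s₀ ((ρ h'⁻¹) y))))
        (fun h'' => π (ι h'') (s₀ ((ρ h''⁻¹) ((ρ h) y)))) ?_)
      intro h'
      have e1 : (ρ (h * h')⁻¹) ((ρ h) y) = (ρ h'⁻¹) y := by
        show (ρ (h * h')⁻¹ * ρ h) y = _
        rw [← map_mul]
        congr 1
        group
      have e2 : ∀ u, π (ι (h * h')) u = π (ι h) (π (ι h') u) := by
        intro u
        rw [map_mul, map_mul]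
        rfl
      simp only [Equiv.coe_mulLeft, e1, e2]
    refine le_trans (Submodule.rank_mono (show M ≤ Submodule.span ℂ {f₁} from ?_)) ?_
    · intro f₂ hf₂M
      have hf₂M' : ∀ (h : H) (v : Vπ), f₂ (π (ι h) v) = ρ h (f₂ v) := hf₂M
      have hcomm : ∀ (f : Vπ →ₗ[ℂ] Vρ), (∀ (h : H) (v : Vπ), f (π (ι h) v) = ρ h (f v)) →
          ∀ h : H, π (ι h) * (s ∘ₗ f) = (s ∘ₗ f) * π (ι h) := by
        intro f hf h
        ext v
        show π (ι h) (s (f v)) = s (f (π (ι h) v))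
        rw [hf h v, hs_eqv h (f v)]
      have hEP := endo_comm π hπ ι hconj (s ∘ₗ f₂) (s ∘ₗ f₁)
        (hcomm f₂ hf₂M') (hcomm f₁ hf₁M')
      have key : ∀ v, f₂ (s (f₁ v)) = f₂ v := by
        intro v
        have h1 : s (f₂ (s (f₁ v))) = s (f₂ v) := by
          have := congrArg (fun t : Module.End ℂ Vπ => t v) hEP
          simp only [Module.End.mul_apply, LinearMap.comp_apply] at this
          -- this : s (f₂ (s (f₁ v))) = s (f₁ (s (f₂ v)))
          rw [this, hs_sec]
        exact hs_inj h1
      have geqv : ∀ (h : H) (y : Vρ), (f₂ ∘ₗ s) (ρ h y) = ρ h ((f₂ ∘ₗ s) y) := by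
        intro h y
        simp only [LinearMap.comp_apply]
        rw [hs_eqv h y, hf₂M' h]
      obtain ⟨c, hc⟩ := schur_scalar hρ (f₂ ∘ₗ s) geqv
      refine Submodule.mem_span_singleton.mpr ⟨c, ?_⟩
      ext v
      have : f₂ v = (f₂ ∘ₗ s) (f₁ v) := by
        simp only [LinearMap.comp_apply]
        rw [key v]
      rw [LinearMap.smul_apply, ← key v]
      have := congrArg (fun t : Module.End ℂ Vρ => t (f₁ v)) hc
      simp only [LinearMap.smul_apply, LinearMap.id_apply] at this
      simp only [LinearMap.comp_apply] at this ⊢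
      exact this.symm
    · calc Module.rank ℂ (Submodule.span ℂ {f₁})
            ≤ Cardinal.mk ({f₁} : Set (Vπ →ₗ[ℂ] Vρ)) := rank_span_le _
        _ = 1 := Cardinal.mk_singleton _
  · have : M = ⊥ := by
      rw [Submodule.eq_bot_iff]
      intro f hf
      by_contra h0
      exact hex ⟨f, hf, h0⟩
    rw [this, rank_bot]
    exact zero_le_one

end GelfandPair
section Reflection

open Equiv

lemma exists_reversing_perm {X : Type*} [Fintype X] [DecidableEq X] [LinearOrder X]
    (g : Equiv.Perm X) (p q : X) :
    ∃ σ : Equiv.Perm X, σ * g * σ⁻¹ = g⁻¹ ∧ (∀ x, σ (σ x) = x) ∧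
      σ p ∈ ({p, q} : Set X) ∧ σ q ∈ ({p, q} : Set X) := by
  classical
  have hmem : ∀ x : X, x ∈ Finset.univ.filter (fun y => g.SameCycle x y) := by
    intro x
    simp only [Finset.mem_filter, Finset.mem_univ, true_and]
    exact Equiv.Perm.SameCycle.refl g x
  set rep0 : X → X :=
    fun x => (Finset.univ.filter (fun y => g.SameCycle x y)).min' ⟨x, hmem x⟩ with hrep0
  have hrep0_cyc : ∀ x, g.SameCycle x (rep0 x) := by
    intro x
    have := Finset.min'_mem (Finset.univ.filter (fun y => g.SameCycle x y)) ⟨x, hmem x⟩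
    simpa using this
  have hrep0_const : ∀ x y, g.SameCycle x y → rep0 x = rep0 y := by
    intro x y hxy
    have : (Finset.univ.filter (fun z => g.SameCycle x z)) =
        (Finset.univ.filter (fun z => g.SameCycle y z)) := by
      ext z
      simp only [Finset.mem_filter, Finset.mem_univ, true_and]
      exact ⟨fun h => hxy.symm.trans h, fun h => hxy.trans h⟩
    simp only [hrep0, this]
  set rep : X → X :=
    fun x => if g.SameCycle p x then p else if g.SameCycle q x then q else rep0 x with hrepdef
  have rep_eq₁ : ∀ z, g.SameCycle p z → rep z = p := by
    intro z hz; simp only [hrepdef]; rw [if_pos hz]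
  have rep_eq₂ : ∀ z, ¬g.SameCycle p z → g.SameCycle q z → rep z = q := by
    intro z h1 h2; simp only [hrepdef]; rw [if_neg h1, if_pos h2]
  have rep_eq₃ : ∀ z, ¬g.SameCycle p z → ¬g.SameCycle q z → rep z = rep0 z := by
    intro z h1 h2; simp only [hrepdef]; rw [if_neg h1, if_neg h2]
  have hrep_cyc : ∀ x, g.SameCycle (rep x) x := by
    intro x
    by_cases h1 : g.SameCycle p x
    · rw [rep_eq₁ x h1]; exact h1
    · by_cases h2 : g.SameCycle q x
      · rw [rep_eq₂ x h1 h2]; exact h2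
      · rw [rep_eq₃ x h1 h2]; exact (hrep0_cyc x).symm
  have hrep_const : ∀ x y, g.SameCycle x y → rep x = rep y := by
    intro x y hxy
    by_cases h1 : g.SameCycle p x
    · rw [rep_eq₁ x h1, rep_eq₁ y (h1.trans hxy)]
    · have h1' : ¬g.SameCycle p y := fun h => h1 (h.trans hxy.symm)
      by_cases h2 : g.SameCycle q x
      · rw [rep_eq₂ x h1 h2, rep_eq₂ y h1' (h2.trans hxy)]
      · have h2' : ¬g.SameCycle q y := fun h => h2 (h.trans hxy.symm)
        rw [rep_eq₃ x h1 h2, rep_eq₃ y h1' h2', hrep0_const x y hxy]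
  set cval : ℤ := if h : g.SameCycle p q then h.choose else 0 with hcval
  set c : X → ℤ := fun x => if g.SameCycle p x then cval else 0 with hcdef
  have c_eq₁ : ∀ z, g.SameCycle p z → c z = cval := by
    intro z hz; simp only [hcdef]; rw [if_pos hz]
  have c_eq₂ : ∀ z, ¬g.SameCycle p z → c z = 0 := by
    intro z hz; simp only [hcdef]; rw [if_neg hz]
  have hc_const : ∀ x y, g.SameCycle x y → c x = c y := by
    intro x y hxy
    by_cases h1 : g.SameCycle p x
    · rw [c_eq₁ x h1, c_eq₁ y (h1.trans hxy)]
    · rw [c_eq₂ x h1, c_eq₂ y (fun h => h1 (h.trans hxy.symm))]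
  have hidx : ∀ x, ∃ i : ℤ, (g ^ i) (rep x) = x := fun x => hrep_cyc x
  set idx : X → ℤ := fun x => (hidx x).choose with hidxdef
  have hidx_spec : ∀ x, (g ^ idx x) (rep x) = x := fun x => (hidx x).choose_spec
  set f : X → X := fun x => (g ^ (c x - idx x)) (rep x) with hfdef
  have hpow_cyc : ∀ (x : X) (i : ℤ), g.SameCycle x ((g ^ i) x) := fun x i => ⟨i, rfl⟩
  have hfx_same : ∀ x, g.SameCycle x (f x) := by
    intro x
    exact (hrep_cyc x).symm.trans (hpow_cyc (rep x) _)
  have hcancel : ∀ (r : X) (a b : ℤ), (g ^ a) r = (g ^ b) r →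
      ∀ t : ℤ, (g ^ (t - a)) r = (g ^ (t - b)) r := by
    intro r a b hab t
    have h := congrArg (fun z => (g ^ (t - a - b)) z) hab
    rw [← Equiv.Perm.mul_apply, ← Equiv.Perm.mul_apply, ← zpow_add, ← zpow_add] at h
    have e1 : t - a - b + a = t - b := by ring
    have e2 : t - a - b + b = t - a := by ring
    rw [e1, e2] at h
    exact h.symm
  have hff : ∀ x, f (f x) = x := by
    intro x
    have h1 : rep (f x) = rep x := (hrep_const _ _ (hfx_same x).symm)
    have h2 : c (f x) = c x := hc_const _ _ (hfx_same x).symm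
    show (g ^ (c (f x) - idx (f x))) (rep (f x)) = x
    rw [h1, h2]
    have h3 : (g ^ idx (f x)) (rep x) = (g ^ (c x - idx x)) (rep x) := by
      have h4 := hidx_spec (f x)
      rw [h1] at h4
      exact h4
    rw [hcancel (rep x) (idx (f x)) (c x - idx x) h3 (c x)]
    have e : c x - (c x - idx x) = idx x := by ring
    rw [e, hidx_spec x]
  set σ : Equiv.Perm X := Function.Involutive.toPerm f hff with hσdef
  have hσ_apply : ∀ x, σ x = f x := fun x => rfl
  have hσinv : ∀ x, σ⁻¹ x = σ x := by
    intro x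
    apply σ.injective
    rw [show σ (σ⁻¹ x) = x from σ.apply_symm_apply x]
    exact (hff x).symm
  have hσgσ : σ * g * σ⁻¹ = g⁻¹ := by
    ext x
    simp only [Equiv.Perm.mul_apply]
    rw [hσinv x, hσ_apply, hσ_apply]
    show f (g (f x)) = g⁻¹ x
    have hy : g (f x) = (g ^ (c x - idx x + 1)) (rep x) := by
      show g ((g ^ (c x - idx x)) (rep x)) = _
      rw [← Equiv.Perm.mul_apply]
      congr 1
      rw [show c x - idx x + 1 = 1 + (c x - idx x) by ring, zpow_one_add]
    have hsame : g.SameCycle x (g (f x)) := (hfx_same x).trans ⟨1, by simp⟩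
    have h1 : rep (g (f x)) = rep x := hrep_const _ _ hsame.symm
    have h2 : c (g (f x)) = c x := hc_const _ _ hsame.symm
    show (g ^ (c (g (f x)) - idx (g (f x)))) (rep (g (f x))) = g⁻¹ x
    rw [h1, h2]
    have h3 : (g ^ idx (g (f x))) (rep x) = (g ^ (c x - idx x + 1)) (rep x) := by
      have h4 := hidx_spec (g (f x))
      rw [h1] at h4
      rw [h4, hy]
    rw [hcancel (rep x) (idx (g (f x))) (c x - idx x + 1) h3 (c x)]
    have e : c x - (c x - idx x + 1) = idx x - 1 := by ring
    rw [e]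
    have : (g ^ (idx x - 1)) (rep x) = g⁻¹ ((g ^ idx x) (rep x)) := by
      rw [← Equiv.Perm.mul_apply]
      congr 1
      rw [show idx x - 1 = -1 + idx x by ring, zpow_add, zpow_neg_one]
    rw [this, hidx_spec x]
  have hmem2 : ∀ a : X, a = p ∨ a = q → a ∈ ({p, q} : Set X) := by
    rintro a (rfl | rfl)
    · exact Set.mem_insert _ _
    · exact Set.mem_insert_iff.mpr (Or.inr rfl)
  by_cases hpq : g.SameCycle p q
  · have hcvp : (g ^ cval) p = q := by
      rw [hcval, dif_pos hpq]
      exact hpq.choose_spec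
    have hrp : rep p = p := rep_eq₁ p (Equiv.Perm.SameCycle.refl g p)
    have hcp : c p = cval := c_eq₁ p (Equiv.Perm.SameCycle.refl g p)
    have hip : (g ^ idx p) p = p := by have := hidx_spec p; rwa [hrp] at this
    have hσp : σ p = q := by
      rw [hσ_apply]
      show (g ^ (c p - idx p)) (rep p) = q
      rw [hrp, hcp]
      have h0 : (g ^ idx p) p = (g ^ (0 : ℤ)) p := by simpa using hip
      rw [hcancel p (idx p) 0 h0 cval]
      simpa using hcvp
    have hσq : σ q = p := by
      rw [← hσp, hσ_apply, hσ_apply, hff]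
    exact ⟨σ, hσgσ, fun x => by rw [hσ_apply, hσ_apply]; exact hff x,
      hmem2 _ (Or.inr hσp), hmem2 _ (Or.inl hσq)⟩
  · have hcv0 : cval = 0 := by rw [hcval, dif_neg hpq]
    have hfix : ∀ x, rep x = x → c x = 0 → σ x = x := by
      intro x hrx hc0
      rw [hσ_apply]
      show (g ^ (c x - idx x)) (rep x) = x
      have hix : (g ^ idx x) x = x := by have := hidx_spec x; rwa [hrx] at this
      have h0 : (g ^ idx x) x = (g ^ (0 : ℤ)) x := by simpa using hix
      rw [hrx, hc0, hcancel x (idx x) 0 h0 0]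
      simp
    have hrp : rep p = p := rep_eq₁ p (Equiv.Perm.SameCycle.refl g p)
    have hcp : c p = 0 := by rw [c_eq₁ p (Equiv.Perm.SameCycle.refl g p), hcv0]
    have hrq : rep q = q := rep_eq₂ q hpq (Equiv.Perm.SameCycle.refl g q)
    have hcq : c q = 0 := c_eq₂ q hpq
    exact ⟨σ, hσgσ, fun x => by rw [hσ_apply, hσ_apply]; exact hff x,
      hmem2 _ (Or.inl (hfix p hrp hcp)), hmem2 _ (Or.inr (hfix q hrq hcq))⟩

end Reflection
section Main

lemma key_conj {n k : ℕ} (p q : Sum (Fin n) (Fin k))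
    (hcov : ∀ b : Fin k, Sum.inr b = p ∨ Sum.inr b = q)
    (hpr : Fin k → (∃ cp, p = Sum.inr cp) ∧ (∃ cq, q = Sum.inr cq))
    (g : Equiv.Perm (Sum (Fin n) (Fin k))) :
    ∃ h : Equiv.Perm (Fin n) × Equiv.Perm (Fin k),
      (Equiv.Perm.sumCongrHom (Fin n) (Fin k)) h * g *
        ((Equiv.Perm.sumCongrHom (Fin n) (Fin k)) h)⁻¹ = g⁻¹ := by
  letI : LinearOrder (Sum (Fin n) (Fin k)) :=
    LinearOrder.lift' finSumFinEquiv finSumFinEquiv.injective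
  obtain ⟨σ, hσg, hσinvol, hσp, hσq⟩ := exists_reversing_perm g p q
  simp only [Set.mem_insert_iff, Set.mem_singleton_iff] at hσp hσq
  have hmaps : Set.MapsTo σ (Set.range Sum.inl) (Set.range Sum.inl) := by
    rintro x ⟨a, rfl⟩
    rcases hx : σ (Sum.inl a) with b | b
    · exact ⟨b, rfl⟩
    · exfalso
      obtain ⟨⟨cp, hp⟩, ⟨cq, hq⟩⟩ := hpr b
      have hin : σ (Sum.inl a) = p ∨ σ (Sum.inl a) = q := by
        rcases hcov b with hb | hb
        · exact Or.inl (hx.trans hb)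
        · exact Or.inr (hx.trans hb)
      have hxin : Sum.inl a = σ p ∨ Sum.inl a = σ q := by
        rcases hin with h1 | h1
        · left; rw [← h1, hσinvol]
        · right; rw [← h1, hσinvol]
      have hxpq : (Sum.inl a : Sum (Fin n) (Fin k)) = p ∨ (Sum.inl a : Sum (Fin n) (Fin k)) = q := by
        rcases hxin with h1 | h1
        · rcases hσp with h2 | h2
          · exact Or.inl (h1.trans h2)
          · exact Or.inr (h1.trans h2)
        · rcases hσq with h2 | h2
          · exact Or.inl (h1.trans h2)
          · exact Or.inr (h1.trans h2)
      rcases hxpq with h1 | h1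
      · rw [hp] at h1; exact Sum.inl_ne_inr h1
      · rw [hq] at h1; exact Sum.inl_ne_inr h1
  obtain ⟨h, hh⟩ := Equiv.Perm.mem_sumCongrHom_range_of_perm_mapsTo_inl hmaps
  exact ⟨h, by rw [hh]; exact hσg⟩

end Main

/-- For `k ≤ 2`, the pair `(S_{n+k}, S_n × S_k)` is a strong Gelfand pair: the
restriction of any irreducible complex representation of `S_{n+k}` to the block
subgroup `S_n × S_k` is multiplicity free.  (This covers the pairs
`(S_{n+1}, S_n)` and `(S_{n+2}, S_n × S_2)`.) -/
theorem symmetricGroup_strong_gelfand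
    (n k : ℕ) (hk : k ≤ 2)
    (Vπ Vρ : Type*) [AddCommGroup Vπ] [Module ℂ Vπ] [AddCommGroup Vρ] [Module ℂ Vρ]
    (π : Representation ℂ (Equiv.Perm (Sum (Fin n) (Fin k))) Vπ)
    (hπ : IsIrreducibleRep π)
    (ρ : Representation ℂ (Equiv.Perm (Fin n) × Equiv.Perm (Fin k)) Vρ)
    (hρ : IsIrreducibleRep ρ) :
    Module.rank ℂ
      (EquivariantMaps (π.comp (Equiv.Perm.sumCongrHom (Fin n) (Fin k))) ρ) ≤ 1 := by
  classical
  refine gelfand_rank_le_one (Equiv.Perm.sumCongrHom (Fin n) (Fin k)) ?_ π hπ ρ hρ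
  intro g
  interval_cases k
  · rcases isEmpty_or_nonempty (Sum (Fin n) (Fin 0)) with he | hne
    · haveI := he
      refine ⟨1, ?_⟩
      have h1 : g⁻¹ = g := Subsingleton.elim _ _
      rw [map_one, h1, one_mul, inv_one, mul_one]
    · obtain ⟨x⟩ := hne
      exact key_conj x x (fun b => b.elim0) (fun b => b.elim0) g
  · exact key_conj (Sum.inr 0) (Sum.inr 0)
      (fun b => Or.inl (by rw [Subsingleton.elim b 0]))
      (fun _ => ⟨⟨0, rfl⟩, ⟨0, rfl⟩⟩) g
  · refine key_conj (Sum.inr 0) (Sum.inr 1) ?_ (fun _ => ⟨⟨0, rfl⟩, ⟨1, rfl⟩⟩) g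
    intro b
    fin_cases b
    · exact Or.inl rfl
    · exact Or.inr rfl
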